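/- Any finite multiset of more than 6 vectors in ℝ², each of norm less than ε, contains two vectors u, v lying in a common 60° sector, and hence with ‖u - v‖ < ε. -/

import Mathlib

open RealInnerProductSpace Classical

private lemma secCos {a b : ℝ} (ha : a ∈ Set.Ioc (-Real.pi) Real.pi)
    (hb : b ∈ Set.Ioc (-Real.pi) Real.pi)
    (h : ((⌊a / (Real.pi / 3)⌋ : ℤ) : ZMod 6) = ((⌊b / (Real.pi / 3)⌋ : ℤ) : ZMod 6)) :
    (1:ℝ)/2 ≤ Real.cos (b - a) := by
  have hπ := Real.pi_pos
  have h3 : (0:ℝ) < Real.pi / 3 := by linarith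
  set fa := ⌊a / (Real.pi / 3)⌋ with hfa
  set fb := ⌊b / (Real.pi / 3)⌋ with hfb
  have hfa1 : (fa:ℝ) * (Real.pi/3) ≤ a := (le_div_iff₀ h3).mp (Int.floor_le _)
  have hfa2 : a < ((fa:ℝ) + 1) * (Real.pi/3) := (div_lt_iff₀ h3).mp (Int.lt_floor_add_one _)
  have hfb1 : (fb:ℝ) * (Real.pi/3) ≤ b := (le_div_iff₀ h3).mp (Int.floor_le _)
  have hfb2 : b < ((fb:ℝ) + 1) * (Real.pi/3) := (div_lt_iff₀ h3).mp (Int.lt_floor_add_one _)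
  have hfaB : -3 ≤ fa ∧ fa ≤ 3 := by
    constructor
    · have : (-4:ℝ) < (fa:ℝ) := by nlinarith [ha.1]
      have : (-4:ℤ) < fa := by exact_mod_cast this
      omega
    · have : (fa:ℝ) < 4 := by nlinarith [ha.2]
      have : fa < (4:ℤ) := by exact_mod_cast this
      omega
  have hfbB : -3 ≤ fb ∧ fb ≤ 3 := by
    constructor
    · have : (-4:ℝ) < (fb:ℝ) := by nlinarith [hb.1]
      have : (-4:ℤ) < fb := by exact_mod_cast this
      omega
    · have : (fb:ℝ) < 4 := by nlinarith [hb.2]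
      have : fb < (4:ℤ) := by exact_mod_cast this
      omega
  have hdvd : (6:ℤ) ∣ fb - fa := Int.ModEq.dvd ((ZMod.intCast_eq_intCast_iff _ _ _).mp h)
  have hcases : fb - fa = -6 ∨ fb - fa = 0 ∨ fb - fa = 6 := by omega
  have key : ∃ t : ℝ, Real.cos (b - a) = Real.cos t ∧ |t| ≤ Real.pi / 3 := by
    rcases hcases with hc | hc | hc
    · -- fa = 3, fb = -3 : a = π, b ∈ (-π, -2π/3)
      have hfa3 : fa = 3 := by omega
      have hfb3 : fb = -3 := by omega
      rw [hfa3] at hfa1; rw [hfb3] at hfb2; push_cast at hfa1 hfb2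
      have haπ : a = Real.pi := by nlinarith [ha.2]
      refine ⟨b - a + 2 * Real.pi, (Real.cos_add_two_pi _).symm, ?_⟩
      rw [abs_le, haπ]
      constructor <;> nlinarith [hb.1]
    · have hfeq : (fa:ℝ) = (fb:ℝ) := by exact_mod_cast (by omega : fa = fb)
      exact ⟨b - a, rfl, by rw [abs_le]; constructor <;> nlinarith⟩
    · -- fb = 3, fa = -3 : b = π, a ∈ (-π, -2π/3)
      have hfb3 : fb = 3 := by omega
      have hfa3 : fa = -3 := by omega
      rw [hfb3] at hfb1; rw [hfa3] at hfa2; push_cast at hfb1 hfa2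
      have hbπ : b = Real.pi := by nlinarith [hb.2]
      refine ⟨b - a - 2 * Real.pi, (Real.cos_sub_two_pi _).symm, ?_⟩
      rw [abs_le, hbπ]
      constructor <;> nlinarith [ha.1]
  obtain ⟨t, ht, htb⟩ := key
  rw [ht, ← Real.cos_abs]
  calc (1:ℝ)/2 = Real.cos (Real.pi/3) := by rw [Real.cos_pi_div_three]
  _ ≤ Real.cos |t| := Real.cos_le_cos_of_nonneg_of_le_pi (abs_nonneg t) (by linarith) htb

private lemma innerC {z w : ℂ} (hz : z ≠ 0) (hw : w ≠ 0)
    (h : ((⌊z.arg / (Real.pi / 3)⌋ : ℤ) : ZMod 6) = ((⌊w.arg / (Real.pi / 3)⌋ : ℤ) : ZMod 6)) :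
    ‖z‖ * ‖w‖ / 2 ≤ z.re * w.re + z.im * w.im := by
  have hcos := secCos (Complex.arg_mem_Ioc z) (Complex.arg_mem_Ioc w) h
  have hz' : ‖z‖ ≠ 0 := by simpa using hz
  have hw' : ‖w‖ ≠ 0 := by simpa using hw
  have hre : z.re * w.re + z.im * w.im
      = ‖z‖ * ‖w‖ * Real.cos (w.arg - z.arg) := by
    rw [Real.cos_sub, Complex.cos_arg hz, Complex.cos_arg hw, Complex.sin_arg, Complex.sin_arg]
    field_simp
  rw [hre]
  have hnn : (0:ℝ) ≤ ‖z‖ * ‖w‖ :=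
    mul_nonneg (norm_nonneg z) (norm_nonneg w)
  nlinarith [mul_le_mul_of_nonneg_left hcos hnn]

theorem stmt18 (S : Multiset (EuclideanSpace ℝ (Fin 2))) (ε : ℝ)
    (hcard : 7 ≤ Multiset.card S) (hS : ∀ x ∈ S, ‖x‖ < ε) :
    ∃ u ∈ S, ∃ v ∈ S.erase u, ⟪u, v⟫ ≥ ‖u‖ * ‖v‖ / 2 ∧ ‖u - v‖ < ε := by
  classical
  set g : EuclideanSpace ℝ (Fin 2) → ZMod 6 :=
    fun x => ((⌊(Complex.mk (x 0) (x 1)).arg / (Real.pi / 3)⌋ : ℤ) : ZMod 6) with hg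
  have hnd : ¬ (S.map g).Nodup := by
    intro hnod
    have h1 : (S.map g).toFinset.card = (S.map g).card := Multiset.toFinset_card_eq_card_iff_nodup.mpr hnod
    have h2 : (S.map g).toFinset.card ≤ Fintype.card (ZMod 6) := Finset.card_le_univ _
    simp [Multiset.card_map] at h1
    rw [h1] at h2
    simp [ZMod.card] at h2
    omega
  rw [Multiset.nodup_iff_count_le_one] at hnd
  push_neg at hnd
  obtain ⟨c, hc⟩ := hnd
  rw [Multiset.count_map] at hc
  set T := Multiset.filter (fun x => c = g x) S with hT
  have hT2 : 2 ≤ Multiset.card T := hc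
  obtain ⟨u, hu⟩ := Multiset.card_pos_iff_exists_mem.mp (show 0 < Multiset.card T by omega)
  have hv : ∃ v, v ∈ T.erase u := by
    apply Multiset.card_pos_iff_exists_mem.mp
    rw [Multiset.card_erase_of_mem hu]
    simp only [Nat.pred_eq_sub_one]
    omega
  obtain ⟨v, hv⟩ := hv
  have huS : u ∈ S := Multiset.mem_of_mem_filter hu
  have hvT : v ∈ T := Multiset.mem_of_mem_erase hv
  have hvS : v ∈ S.erase u :=
    Multiset.mem_of_le (Multiset.erase_le_erase u (Multiset.filter_le _ S)) hv
  have hvS' : v ∈ S := Multiset.mem_of_mem_filter hvT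
  have hgu : c = g u := by
    have h := hu; rw [hT, Multiset.mem_filter] at h; exact h.2
  have hgv : c = g v := by
    have h := hvT; rw [hT, Multiset.mem_filter] at h; exact h.2
  have hεu : ‖u‖ < ε := hS u huS
  have hεv : ‖v‖ < ε := hS v hvS'
  have hε : 0 < ε := lt_of_le_of_lt (norm_nonneg u) hεu
  have hinner : ∀ x y : EuclideanSpace ℝ (Fin 2), ⟪x, y⟫ = x 0 * y 0 + x 1 * y 1 := by
    intro x y
    simp [PiLp.inner_apply, Fin.sum_univ_two, mul_comm]
  have hnormc : ∀ x : EuclideanSpace ℝ (Fin 2), ‖x‖ = ‖Complex.mk (x 0) (x 1)‖ := by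
    intro x
    rw [EuclideanSpace.norm_eq, Complex.norm_def, Complex.normSq_mk]
    simp only [Fin.sum_univ_two, Real.norm_eq_abs, sq_abs]
    congr 1
    ring
  have hmain : ⟪u, v⟫ ≥ ‖u‖ * ‖v‖ / 2 := by
    by_cases hu0 : u = 0
    · subst hu0; simp
    by_cases hv0 : v = 0
    · subst hv0; simp
    · have hzu : Complex.mk (u 0) (u 1) ≠ 0 := by
        intro hcon
        rw [Complex.ext_iff] at hcon
        simp only [Complex.zero_re, Complex.zero_im] at hcon
        exact hu0 (by ext i; fin_cases i <;> simp [hcon.1, hcon.2])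
      have hzv : Complex.mk (v 0) (v 1) ≠ 0 := by
        intro hcon
        rw [Complex.ext_iff] at hcon
        simp only [Complex.zero_re, Complex.zero_im] at hcon
        exact hv0 (by ext i; fin_cases i <;> simp [hcon.1, hcon.2])
      have hsec : ((⌊(Complex.mk (u 0) (u 1)).arg / (Real.pi / 3)⌋ : ℤ) : ZMod 6)
          = ((⌊(Complex.mk (v 0) (v 1)).arg / (Real.pi / 3)⌋ : ℤ) : ZMod 6) :=
        hgu.symm.trans hgv
      have := innerC hzu hzv hsec
      rw [hinner u v, hnormc u, hnormc v]
      simpa using this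
  refine ⟨u, huS, v, hvS, hmain, ?_⟩
  have hsq : ‖u - v‖^2 = ‖u‖^2 - 2 * ⟪u, v⟫ + ‖v‖^2 := norm_sub_sq_real u v
  nlinarith [norm_nonneg (u - v), norm_nonneg u, norm_nonneg v,
    mul_pos (sub_pos.mpr hεu) (sub_pos.mpr hεv),
    mul_nonneg (sub_pos.mpr hεu).le (norm_nonneg u),
    mul_nonneg (sub_pos.mpr hεv).le (norm_nonneg v)]
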